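/- Suppose a : [0,T]×[0,T] → ℝ satisfies the comparability hypothesis of the previous statement, with a(t,t) = t for all t (normalization lmr(g_t) = t). Define c(t) as the limit of the telescoping sums over partitions of [0,t]. Then c : [0,T] → ℝ is increasing, c(0) = 0, and c is Lipschitz continuous with Lipschitz constant 1: 0 ≤ c(t₂) − c(t₁) ≤ t₂ − t₁ for 0 ≤ t₁ ≤ t₂ ≤ T. -/

import Mathlib

/-- A partition 0 = t₀ < t₁ < ... < t_n = t of [0,t]. -/
structure TelescopePartition (t : ℝ) where
  n : ℕ
  pts : ℕ → ℝ
  mono : ∀ i, i < n → pts i < pts (i + 1)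
  first : pts 0 = 0
  last : pts n = t

/-- The mesh of a partition: the maximal step size. -/
noncomputable def TelescopePartition.mesh {t : ℝ} (P : TelescopePartition t) : ℝ :=
  (Finset.range P.n).fold max 0 fun i => P.pts (i + 1) - P.pts i

/-- The telescoping sum S(a,P) = Σ_l [a(t_{l+1},t_l) − a(t_l,t_l)]. -/
noncomputable def psum {t : ℝ} (a : ℝ → ℝ → ℝ) (P : TelescopePartition t) : ℝ :=
  ∑ i ∈ Finset.range P.n, (a (P.pts (i + 1)) (P.pts i) - a (P.pts i) (P.pts i))

/- ---------- auxiliary material ---------- -/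

lemma mesh_le {t : ℝ} (P : TelescopePartition t) {b : ℝ} (hb : 0 ≤ b)
    (h : ∀ i ∈ Finset.range P.n, P.pts (i + 1) - P.pts i ≤ b) : P.mesh ≤ b :=
  (Finset.fold_max_le b).mpr ⟨hb, h⟩

/-- points of a two-block partition: uniform on [0,s] with n steps,
then uniform on [s,t] with n steps. -/
noncomputable def tb (s t : ℝ) (n : ℕ) : ℕ → ℝ :=
  fun i => if i ≤ n then (i : ℝ) * (s / n) else s + ((i - n : ℕ) : ℝ) * ((t - s) / n)

lemma tb_shift (s t : ℝ) {n : ℕ} (hn : 0 < n) (i : ℕ) :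
    tb s t n (n + i) = s + (i : ℝ) * ((t - s) / n) := by
  unfold tb
  rcases Nat.eq_zero_or_pos i with h | h
  · subst h
    rw [if_pos (by omega)]
    have : (n : ℝ) ≠ 0 := Nat.cast_ne_zero.mpr hn.ne'
    field_simp
    push_cast; ring
  · rw [if_neg (by omega)]
    have : n + i - n = i := by omega
    rw [this]

noncomputable def P1 (s t : ℝ) (n : ℕ) (hs : 0 < s) (hn : 0 < n) : TelescopePartition s where
  n := n
  pts := tb s t n
  mono i hi := by
    unfold tb
    rw [if_pos (by omega), if_pos (by omega)]
    have hdiv : (0 : ℝ) < s / n := div_pos hs (Nat.cast_pos.mpr hn)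
    have : ((i : ℝ)) < ((i + 1 : ℕ) : ℝ) := by push_cast; linarith
    exact mul_lt_mul_of_pos_right this hdiv
  first := by unfold tb; simp
  last := by
    unfold tb
    rw [if_pos le_rfl]
    have : (n : ℝ) ≠ 0 := Nat.cast_ne_zero.mpr hn.ne'
    field_simp

noncomputable def P2 (s t : ℝ) (n : ℕ) (hs : 0 < s) (hst : s < t) (hn : 0 < n) :
    TelescopePartition t where
  n := n + n
  pts := tb s t n
  mono i hi := by
    have hdiv2 : (0 : ℝ) < (t - s) / n := div_pos (by linarith) (Nat.cast_pos.mpr hn)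
    by_cases h : i + 1 ≤ n
    · unfold tb
      rw [if_pos (by omega), if_pos (by omega)]
      have hdiv : (0 : ℝ) < s / n := div_pos hs (Nat.cast_pos.mpr hn)
      have : ((i : ℝ)) < ((i + 1 : ℕ) : ℝ) := by push_cast; linarith
      exact mul_lt_mul_of_pos_right this hdiv
    · have hni : n ≤ i := by omega
      obtain ⟨j, rfl⟩ := Nat.exists_eq_add_of_le hni
      rw [show n + j + 1 = n + (j + 1) from rfl, tb_shift s t hn, tb_shift s t hn]
      have : ((j : ℝ)) < ((j + 1 : ℕ) : ℝ) := by push_cast; linarith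
      have := mul_lt_mul_of_pos_right this hdiv2
      linarith
  first := by unfold tb; simp
  last := by
    rw [tb_shift s t hn n]
    have : (n : ℝ) ≠ 0 := Nat.cast_ne_zero.mpr hn.ne'
    field_simp
    ring

noncomputable def P0 (t : ℝ) (n : ℕ) (ht : 0 < t) (hn : 0 < n) : TelescopePartition t where
  n := n
  pts := fun i => 0 + (i : ℝ) * ((t - 0) / n)
  mono i hi := by
    have hdiv : (0 : ℝ) < (t - 0) / n := div_pos (by linarith) (Nat.cast_pos.mpr hn)
    have : ((i : ℝ)) < ((i + 1 : ℕ) : ℝ) := by push_cast; linarith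
    have := mul_lt_mul_of_pos_right this hdiv
    linarith
  first := by simp
  last := by
    have : (n : ℝ) ≠ 0 := Nat.cast_ne_zero.mpr hn.ne'
    field_simp
    ring

/-- the "block sum" over a uniform partition of [s,t] with n steps. -/
noncomputable def bsum (a : ℝ → ℝ → ℝ) (s t : ℝ) (n : ℕ) : ℝ :=
  ∑ i ∈ Finset.range n,
    (a (s + ((i : ℝ) + 1) * ((t - s) / n)) (s + (i : ℝ) * ((t - s) / n))
      - a (s + (i : ℝ) * ((t - s) / n)) (s + (i : ℝ) * ((t - s) / n)))

lemma P0_mesh (t : ℝ) (n : ℕ) (ht : 0 < t) (hn : 0 < n) :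
    (P0 t n ht hn).mesh ≤ t / n := by
  apply mesh_le _ (le_of_lt (div_pos ht (Nat.cast_pos.mpr hn)))
  intro i _
  show (0 + ((i + 1 : ℕ) : ℝ) * ((t - 0) / n)) - (0 + (i : ℝ) * ((t - 0) / n)) ≤ t / n
  push_cast
  ring_nf
  simp [mul_comm]

lemma P0_psum (a : ℝ → ℝ → ℝ) (t : ℝ) (n : ℕ) (ht : 0 < t) (hn : 0 < n) :
    psum a (P0 t n ht hn) = bsum a 0 t n := by
  unfold psum bsum P0
  refine Finset.sum_congr rfl fun i _ => ?_
  push_cast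
  ring_nf

lemma P1_mesh (s t : ℝ) (n : ℕ) (hs : 0 < s) (hn : 0 < n) :
    (P1 s t n hs hn).mesh ≤ s / n := by
  apply mesh_le _ (le_of_lt (div_pos hs (Nat.cast_pos.mpr hn)))
  intro i hi
  rw [Finset.mem_range] at hi
  replace hi : i < n := hi
  show tb s t n (i + 1) - tb s t n i ≤ s / n
  unfold tb
  rw [if_pos (by omega), if_pos (by omega)]
  push_cast
  ring_nf
  simp [mul_comm]

lemma P2_mesh (s t : ℝ) (n : ℕ) (hs : 0 < s) (hst : s < t) (hn : 0 < n) :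
    (P2 s t n hs hst hn).mesh ≤ t / n := by
  have hnR : (0 : ℝ) < n := Nat.cast_pos.mpr hn
  apply mesh_le _ (le_of_lt (div_pos (by linarith) hnR))
  intro i hi
  rw [Finset.mem_range] at hi
  replace hi : i < n + n := hi
  show tb s t n (i + 1) - tb s t n i ≤ t / n
  by_cases h : i + 1 ≤ n
  · unfold tb
    rw [if_pos h, if_pos (by omega)]
    push_cast
    have heq : ((i : ℝ) + 1) * (s / n) - (i : ℝ) * (s / n) = s / n := by ring
    rw [heq]
    gcongr
  · have hni : n ≤ i := by omega
    obtain ⟨j, rfl⟩ := Nat.exists_eq_add_of_le hni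
    rw [show n + j + 1 = n + (j + 1) from rfl, tb_shift s t hn, tb_shift s t hn]
    push_cast
    have heq : (s + ((j : ℝ) + 1) * ((t - s) / n)) - (s + (j : ℝ) * ((t - s) / n))
        = (t - s) / n := by ring
    rw [heq]
    gcongr
    linarith


lemma P2_psum (a : ℝ → ℝ → ℝ) (s t : ℝ) (n : ℕ) (hs : 0 < s) (hst : s < t) (hn : 0 < n) :
    psum a (P2 s t n hs hst hn) = psum a (P1 s t n hs hn) + bsum a s t n := by
  unfold psum bsum
  show ∑ i ∈ Finset.range (n + n),
      (a (tb s t n (i + 1)) (tb s t n i) - a (tb s t n i) (tb s t n i)) = _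
  rw [Finset.sum_range_add]
  congr 1
  refine Finset.sum_congr rfl fun i _ => ?_
  rw [show n + i + 1 = n + (i + 1) from rfl, tb_shift s t hn, tb_shift s t hn]
  push_cast
  ring_nf

lemma block_bound {T : ℝ} {a : ℝ → ℝ → ℝ}
    (hmono : ∀ τ ∈ Set.Icc 0 T, StrictMonoOn (fun t => a t τ) (Set.Icc 0 T))
    (hmono2 : ∀ t ∈ Set.Icc 0 T, MonotoneOn (a t) (Set.Icc 0 T))
    (hdiag : ∀ t ∈ Set.Icc 0 T, a t t = t)
    {s t : ℝ} {n : ℕ} (hn : 0 < n) (hs : 0 ≤ s) (hst : s < t) (ht : t ≤ T) :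
    0 ≤ bsum a s t n ∧ bsum a s t n ≤ t - s := by
  have hnR : (0 : ℝ) < n := Nat.cast_pos.mpr hn
  set h := (t - s) / n with hh_def
  have hh : 0 < h := div_pos (by linarith) hnR
  have hnh : (n : ℝ) * h = t - s := by
    rw [hh_def]; field_simp
  have key : ∀ i ∈ Finset.range n,
      (0 ≤ a (s + ((i : ℝ) + 1) * h) (s + (i : ℝ) * h) - a (s + (i : ℝ) * h) (s + (i : ℝ) * h)
        ∧ a (s + ((i : ℝ) + 1) * h) (s + (i : ℝ) * h) - a (s + (i : ℝ) * h) (s + (i : ℝ) * h) ≤ h) := by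
    intro i hi
    rw [Finset.mem_range] at hi
    set x := s + (i : ℝ) * h with hx_def
    set y := s + ((i : ℝ) + 1) * h with hy_def
    have hxy : x < y := by rw [hx_def, hy_def]; nlinarith
    have hiR : ((i : ℝ) + 1) ≤ (n : ℝ) := by exact_mod_cast Nat.succ_le_of_lt hi
    have hyt : y ≤ t := by
      rw [hy_def]
      nlinarith [mul_le_mul_of_nonneg_right hiR hh.le]
    have hx0 : 0 ≤ x := by
      rw [hx_def]
      have hih : (0:ℝ) ≤ (i:ℝ) * h := by positivity
      linarith
    have hxm : x ∈ Set.Icc (0 : ℝ) T := ⟨hx0, by linarith⟩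
    have hym : y ∈ Set.Icc (0 : ℝ) T := ⟨by linarith, by linarith⟩
    have h1 : a x x < a y x := hmono x hxm hxm hym hxy
    have h2 : a y x ≤ a y y := hmono2 y hym hxm hym (le_of_lt hxy)
    have h3 : a y y = y := hdiag y hym
    have h4 : a x x = x := hdiag x hxm
    constructor
    · linarith
    · have : y - x = h := by rw [hx_def, hy_def]; ring
      linarith
  constructor
  · exact Finset.sum_nonneg fun i hi => (key i hi).1
  · calc bsum a s t n ≤ ∑ _i ∈ Finset.range n, h :=
        Finset.sum_le_sum fun i hi => (key i hi).2
      _ = (n : ℝ) * h := by rw [Finset.sum_const, Finset.card_range]; ring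
      _ = t - s := hnh

/-- Under the comparability hypothesis, monotonicity in each variable and the
normalization a(t,t) = t, the limit function c of the telescoping sums is increasing,
c(0) = 0, and 1-Lipschitz: 0 ≤ c(t₂) − c(t₁) ≤ t₂ − t₁. -/
theorem cumulative_lipschitz (T : ℝ) (hT : 0 < T)
    (a : ℝ → ℝ → ℝ) (c : ℝ → ℝ)
    (hmono : ∀ τ ∈ Set.Icc 0 T, StrictMonoOn (fun t => a t τ) (Set.Icc 0 T))
    (hmono2 : ∀ t ∈ Set.Icc 0 T, MonotoneOn (a t) (Set.Icc 0 T))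
    (hcomp : ∀ ε > 0, ∃ δ > 0, ∀ s t τ τ' : ℝ, s ∈ Set.Icc 0 T → t ∈ Set.Icc 0 T →
      τ ∈ Set.Icc 0 T → τ' ∈ Set.Icc 0 T → s < t → t - s < δ → |τ - τ'| < δ →
      1 - ε < (a t τ - a s τ) / (a t τ' - a s τ') ∧
        (a t τ - a s τ) / (a t τ' - a s τ') < 1 + ε)
    (hdiag : ∀ t ∈ Set.Icc 0 T, a t t = t)
    (hc : ∀ t ∈ Set.Icc 0 T, ∀ ε > 0, ∃ δ > 0, ∀ P : TelescopePartition t,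
      P.mesh < δ → |psum a P - c t| < ε) :
    c 0 = 0 ∧ MonotoneOn c (Set.Icc 0 T) ∧
      ∀ t₁ t₂ : ℝ, 0 ≤ t₁ → t₁ ≤ t₂ → t₂ ≤ T →
        0 ≤ c t₂ - c t₁ ∧ c t₂ - c t₁ ≤ t₂ - t₁ := by
  have h0T : (0 : ℝ) ∈ Set.Icc (0 : ℝ) T := ⟨le_refl 0, le_of_lt hT⟩
  -- c 0 = 0
  have hc0 : c 0 = 0 := by
    have hPz : ∀ ε > 0, |c 0| < ε := by
      intro ε hε
      obtain ⟨δ, hδ, H⟩ := hc 0 h0T ε hε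
      let P : TelescopePartition 0 := ⟨0, fun _ => 0, by simp, rfl, rfl⟩
      have hmesh : P.mesh < δ := by
        show (Finset.range 0).fold max 0 _ < δ
        simpa using hδ
      have := H P hmesh
      have hps : psum a P = 0 := by simp [psum, P]
      rw [hps] at this
      simpa [abs_sub_comm] using this
    by_contra hne
    exact lt_irrefl _ (hPz |c 0| (abs_pos.mpr hne))
  -- main estimate
  have key : ∀ t₁ t₂ : ℝ, 0 ≤ t₁ → t₁ ≤ t₂ → t₂ ≤ T →
      0 ≤ c t₂ - c t₁ ∧ c t₂ - c t₁ ≤ t₂ - t₁ := by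
    intro t₁ t₂ h0 h12 h2T
    rcases eq_or_lt_of_le h12 with rfl | hlt
    · simp
    have memT₁ : t₁ ∈ Set.Icc (0 : ℝ) T := ⟨h0, by linarith⟩
    have memT₂ : t₂ ∈ Set.Icc (0 : ℝ) T := ⟨by linarith, h2T⟩
    have ht₂pos : 0 < t₂ := lt_of_le_of_lt h0 hlt
    suffices H : ∀ ε > 0, -(2 * ε) ≤ c t₂ - c t₁ ∧ c t₂ - c t₁ ≤ t₂ - t₁ + 2 * ε by
      constructor
      · by_contra hcon
        push_neg at hcon
        have := (H ((c t₁ - c t₂) / 4) (by linarith)).1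
        linarith
      · by_contra hcon
        push_neg at hcon
        have := (H ((c t₂ - c t₁ - (t₂ - t₁)) / 4) (by linarith)).2
        linarith
    intro ε hε
    obtain ⟨δ₁, hδ₁, H₁⟩ := hc t₁ memT₁ ε hε
    obtain ⟨δ₂, hδ₂, H₂⟩ := hc t₂ memT₂ ε hε
    have hδ : 0 < min δ₁ δ₂ := lt_min hδ₁ hδ₂
    obtain ⟨n, hn⟩ := exists_nat_gt (t₂ / min δ₁ δ₂)
    have hnpos : 0 < n := by
      have : (0 : ℝ) < t₂ / min δ₁ δ₂ := div_pos ht₂pos hδ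
      exact_mod_cast Nat.cast_pos.mp (lt_trans this hn)
    have hnR : (0 : ℝ) < n := Nat.cast_pos.mpr hnpos
    have hmesh : t₂ / (n : ℝ) < min δ₁ δ₂ := by
      rw [div_lt_iff₀ hnR]
      calc t₂ = (t₂ / min δ₁ δ₂) * min δ₁ δ₂ := by field_simp
        _ < (n : ℝ) * min δ₁ δ₂ := by
            exact mul_lt_mul_of_pos_right hn hδ
        _ = min δ₁ δ₂ * n := by ring
    rcases eq_or_lt_of_le h0 with rfl | ht₁pos
    · -- t₁ = 0
      rw [hc0]
      have hm : (P0 t₂ n ht₂pos hnpos).mesh < δ₂ :=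
        lt_of_le_of_lt (P0_mesh t₂ n ht₂pos hnpos)
          (lt_of_lt_of_le hmesh (min_le_right _ _))
      have h₂ := H₂ (P0 t₂ n ht₂pos hnpos) hm
      rw [P0_psum] at h₂
      obtain ⟨hb1, hb2⟩ := block_bound hmono hmono2 hdiag hnpos le_rfl ht₂pos h2T
      rw [abs_lt] at h₂
      constructor <;> [linarith; linarith]
    · -- 0 < t₁
      have hm₁ : (P1 t₁ t₂ n ht₁pos hnpos).mesh < δ₁ := by
        refine lt_of_le_of_lt (P1_mesh t₁ t₂ n ht₁pos hnpos) ?_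
        have : t₁ / (n : ℝ) ≤ t₂ / (n : ℝ) := by gcongr
        exact lt_of_le_of_lt this (lt_of_lt_of_le hmesh (min_le_left _ _))
      have hm₂ : (P2 t₁ t₂ n ht₁pos hlt hnpos).mesh < δ₂ :=
        lt_of_le_of_lt (P2_mesh t₁ t₂ n ht₁pos hlt hnpos)
          (lt_of_lt_of_le hmesh (min_le_right _ _))
      have h₁ := H₁ (P1 t₁ t₂ n ht₁pos hnpos) hm₁
      have h₂ := H₂ (P2 t₁ t₂ n ht₁pos hlt hnpos) hm₂
      rw [P2_psum] at h₂
      obtain ⟨hb1, hb2⟩ := block_bound hmono hmono2 hdiag hnpos (le_of_lt ht₁pos) hlt h2T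
      rw [abs_lt] at h₁ h₂
      constructor <;> [linarith; linarith]
  refine ⟨hc0, ?_, key⟩
  intro x hx y hy hxy
  have := (key x y hx.1 hxy hy.2).1
  linarith
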